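/- Let M be an n×n matrix, q ∈ ℝⁿ, F(x) = (M+I)x + (M−I)|x| + q, and F̃(p,x) = (M+I)x + (1/p)(M−I)·ln(1 + e^{px} + e^{-px}) + q (applied componentwise inside the logarithm). Then for all x ∈ ℝⁿ and all p > 0, ‖F̃(p,x) − F(x)‖ ≤ (ln 3 / p)·‖M − I‖·√n, where ‖M − I‖ is the operator norm. Consequently F̃(p,·) → F uniformly on ℝⁿ as p → +∞. -/

import Mathlib

open Matrix

lemma scalar_bound (t : ℝ) :
    abs (Real.log (1 + Real.exp t + Real.exp (-t)) - |t|) ≤ Real.log 3 := by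
  have h1 : Real.exp |t| ≤ 1 + Real.exp t + Real.exp (-t) := by
    rcases abs_cases t with ⟨h, _⟩ | ⟨h, _⟩ <;> rw [h] <;>
      nlinarith [Real.exp_pos t, Real.exp_pos (-t)]
  have h2 : 1 + Real.exp t + Real.exp (-t) ≤ 3 * Real.exp |t| := by
    have a1 : (1:ℝ) ≤ Real.exp |t| := Real.one_le_exp (abs_nonneg t)
    have a2 : Real.exp t ≤ Real.exp |t| := Real.exp_le_exp.2 (le_abs_self t)
    have a3 : Real.exp (-t) ≤ Real.exp |t| := Real.exp_le_exp.2 (neg_le_abs t)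
    linarith
  have hpos : (0:ℝ) < 1 + Real.exp t + Real.exp (-t) := by positivity
  have lo : |t| ≤ Real.log (1 + Real.exp t + Real.exp (-t)) := by
    calc |t| = Real.log (Real.exp |t|) := (Real.log_exp _).symm
    _ ≤ _ := Real.log_le_log (Real.exp_pos _) h1
  have hi : Real.log (1 + Real.exp t + Real.exp (-t)) ≤ Real.log 3 + |t| := by
    calc Real.log (1 + Real.exp t + Real.exp (-t)) ≤ Real.log (3 * Real.exp |t|) :=
      Real.log_le_log hpos h2
    _ = Real.log 3 + |t| := by rw [Real.log_mul (by norm_num) (Real.exp_ne_zero _), Real.log_exp]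
  rw [abs_le]
  constructor <;> [linarith [Real.log_nonneg (by norm_num : (1:ℝ) ≤ 3)]; linarith]

theorem stmt_12 {n : ℕ} (M : Matrix (Fin n) (Fin n) ℝ) (q : Fin n → ℝ) :
    let F : (Fin n → ℝ) → (Fin n → ℝ) :=
      fun x => (M + 1).mulVec x + (M - 1).mulVec (fun i => |x i|) + q
    let Ft : ℝ → (Fin n → ℝ) → (Fin n → ℝ) := fun p x =>
      (M + 1).mulVec x +
        (M - 1).mulVec (fun i => (1 / p) * Real.log (1 + Real.exp (p * x i) +
          Real.exp (-(p * x i)))) + q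
    let e := (WithLp.equiv 2 (Fin n → ℝ)).symm
    (∀ x : Fin n → ℝ, ∀ p : ℝ, 0 < p →
      ‖e (Ft p x) - e (F x)‖ ≤
        (Real.log 3 / p) * ‖Matrix.toEuclideanCLM (𝕜 := ℝ) (n := Fin n) (M - 1)‖ * Real.sqrt n) ∧
    ∀ ε > (0 : ℝ), ∃ P > (0 : ℝ), ∀ p > P, ∀ x : Fin n → ℝ,
      ‖e (Ft p x) - e (F x)‖ < ε := by
  intro F Ft e
  set C := ‖Matrix.toEuclideanCLM (𝕜 := ℝ) (n := Fin n) (M - 1)‖ with hC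
  have hCnn : 0 ≤ C := norm_nonneg _
  have key : ∀ x : Fin n → ℝ, ∀ p : ℝ, 0 < p →
      ‖e (Ft p x) - e (F x)‖ ≤ (Real.log 3 / p) * C * Real.sqrt n := by
    intro x p hp
    set d : Fin n → ℝ := fun i =>
      (1 / p) * Real.log (1 + Real.exp (p * x i) + Real.exp (-(p * x i))) - |x i| with hd
    have hdiff : Ft p x - F x = (M - 1).mulVec d := by
      simp only [Ft, F, hd]
      funext i
      simp [mulVec, dotProduct, Finset.mul_sum, ← Finset.sum_sub_distrib, mul_sub]
    have hediff : e (Ft p x) - e (F x) = e ((M - 1).mulVec d) := by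
      rw [← hdiff]; rfl
    have hdbound : ∀ i, |d i| ≤ Real.log 3 / p := by
      intro i
      have hs := scalar_bound (p * x i)
      have habs : |p * x i| = p * |x i| := by rw [abs_mul, abs_of_pos hp]
      have hdi : d i = (1/p) * (Real.log (1 + Real.exp (p * x i) + Real.exp (-(p * x i))) - |p * x i|) := by
        simp only [hd, habs]
        field_simp
      rw [hdi, abs_mul, abs_of_pos (by positivity : (0:ℝ) < 1/p)]
      calc 1/p * abs (Real.log (1 + Real.exp (p * x i) + Real.exp (-(p * x i))) - |p * x i|)
          ≤ 1/p * Real.log 3 := mul_le_mul_of_nonneg_left hs (by positivity)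
        _ = Real.log 3 / p := by ring
    have hed : ‖e d‖ ≤ Real.sqrt n * (Real.log 3 / p) := by
      rw [EuclideanSpace.norm_eq (e d)]
      have heq : Real.sqrt n * (Real.log 3 / p) = Real.sqrt (n * (Real.log 3 / p)^2) := by
        rw [Real.sqrt_mul (Nat.cast_nonneg n), Real.sqrt_sq (by positivity)]
      rw [heq]
      apply Real.sqrt_le_sqrt
      calc ∑ i, ‖(e d) i‖^2 ≤ ∑ _i : Fin n, (Real.log 3 / p)^2 := by
            apply Finset.sum_le_sum
            intro i _
            have hni : ‖(e d) i‖ = |d i| := rfl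
            rw [hni]
            exact sq_le_sq' (by linarith [abs_nonneg (d i), hdbound i, neg_abs_le (d i)])
              (hdbound i)
        _ = n * (Real.log 3 / p)^2 := by simp [Finset.sum_const, nsmul_eq_mul]
    calc ‖e (Ft p x) - e (F x)‖ = ‖toEuclideanCLM (𝕜 := ℝ) (M - 1) (e d)‖ := by
          rw [hediff, show e = (WithLp.equiv 2 (Fin n → ℝ)).symm from rfl,
            WithLp.equiv_symm_apply, toEuclideanCLM_toLp]
      _ ≤ C * ‖e d‖ := (toEuclideanCLM (𝕜 := ℝ) (M - 1)).le_opNorm _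
      _ ≤ C * (Real.sqrt n * (Real.log 3 / p)) := mul_le_mul_of_nonneg_left hed hCnn
      _ = (Real.log 3 / p) * C * Real.sqrt n := by ring
  refine ⟨key, ?_⟩
  intro ε hε
  refine ⟨max 1 (Real.log 3 * C * Real.sqrt n / ε), lt_max_of_lt_left one_pos, ?_⟩
  intro p hp x
  have hp1 : (1:ℝ) < p := lt_of_le_of_lt (le_max_left _ _) hp
  have hp0 : 0 < p := by linarith
  have hbd := key x p hp0
  have h2 : Real.log 3 * C * Real.sqrt n / ε < p := lt_of_le_of_lt (le_max_right _ _) hp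
  have hlt : (Real.log 3 / p) * C * Real.sqrt n < ε := by
    rw [div_lt_iff₀ hε] at h2
    rw [show (Real.log 3 / p) * C * Real.sqrt n = Real.log 3 * C * Real.sqrt n / p by ring,
      div_lt_iff₀ hp0]
    nlinarith
  linarith
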